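/- For all complex numbers x, y and every nonnegative integer n, (x + y)·p_{2n+1,μ}(x,y) = p_{2n+2,μ}(x,y) + (2μ/(n+1))·Σ_{k=0}^{n} C_μ(2n+2, 2k+1) x^{2k+1} y^{2n+1-2k}. -/

import Mathlib

open Finset

/-- The μ-deformed factorial function γ_μ. -/
noncomputable def gammaMu (μ : ℝ) : ℕ → ℝ
  | 0 => 1
  | n + 1 => ((n + 1 : ℝ) + 2 * μ * (if Odd (n + 1) then 1 else 0)) * gammaMu μ n

/-- The μ-deformed binomial coefficient C_μ(n,k), zero outside 0 ≤ k ≤ n. -/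
noncomputable def binomMu (μ : ℝ) (n : ℕ) (k : ℤ) : ℝ :=
  if 0 ≤ k ∧ k ≤ (n : ℤ) then gammaMu μ n / (gammaMu μ (n - k.toNat) * gammaMu μ k.toNat) else 0

/-- The n-th μ-deformed binomial polynomial p_{n,μ}(x,y). -/
noncomputable def pMu (μ : ℝ) (n : ℕ) (x y : ℂ) : ℂ :=
  ∑ k ∈ Finset.range (n + 1), (binomMu μ n k : ℂ) * x ^ k * y ^ (n - k)

/-- The μ-deformed exponential function. -/
noncomputable def expMu (μ : ℝ) (z : ℂ) : ℂ :=
  ∑' n : ℕ, z ^ n / (gammaMu μ n : ℂ)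

/-- The Bessel function of the first kind of order ν, for positive real argument. -/
noncomputable def besselJ (ν x : ℝ) : ℝ :=
  ∑' m : ℕ, ((-1) ^ m / (Nat.factorial m * Real.Gamma (ν + m + 1))) * (x / 2) ^ ((2 * m : ℝ) + ν)

lemma gammaMu_pos (μ : ℝ) (hμ : -(1/2 : ℝ) < μ) : ∀ n, 0 < gammaMu μ n := by
  intro n
  induction n with
  | zero => norm_num [gammaMu]
  | succ m ih =>
    rw [gammaMu]
    apply mul_pos _ ih
    by_cases h : Odd (m+1) <;> simp [h] <;> push_cast <;> nlinarith [Nat.cast_nonneg (α := ℝ) m]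

lemma binomMu_nat (μ : ℝ) (n j : ℕ) (h : j ≤ n) :
    binomMu μ n (j : ℤ) = gammaMu μ n / (gammaMu μ (n - j) * gammaMu μ j) := by
  have : (j:ℤ) ≤ (n:ℤ) := by exact_mod_cast h
  simp [binomMu, this, Int.toNat_natCast]

lemma gammaMu_succ (μ : ℝ) (m : ℕ) :
    gammaMu μ (m + 1) = ((m + 1 : ℝ) + 2 * μ * (if Odd (m + 1) then 1 else 0)) * gammaMu μ m :=
  rfl

lemma binomMu_zero (μ : ℝ) (hμ : -(1/2 : ℝ) < μ) (m : ℕ) : binomMu μ m 0 = 1 := by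
  have h := binomMu_nat μ m 0 (Nat.zero_le m)
  push_cast at h
  rw [h]
  simp [gammaMu, div_self (ne_of_gt (gammaMu_pos μ hμ m))]

lemma binomMu_self (μ : ℝ) (hμ : -(1/2 : ℝ) < μ) (m : ℕ) : binomMu μ m m = 1 := by
  rw [binomMu_nat μ m m le_rfl]
  simp [gammaMu, div_self (ne_of_gt (gammaMu_pos μ hμ m))]

lemma binomMu_neg_one (μ : ℝ) (m : ℕ) : binomMu μ m (-1) = 0 := by
  simp [binomMu]

lemma binomMu_gt (μ : ℝ) (m : ℕ) (k : ℤ) (h : (m : ℤ) < k) : binomMu μ m k = 0 := by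
  rw [binomMu, if_neg]; rintro ⟨-, h2⟩; omega

lemma alg_helper (Cc t G A B u v : ℝ) (hA : A ≠ 0) (hB : B ≠ 0) (hu : u ≠ 0) (hv : v ≠ 0)
    (hC : Cc * t = u + v) :
    G/(u*B*A) + G/(B*(v*A)) = Cc * (t*G/(u*B*(v*A))) := by
  have h : Cc * (t*G/(u*B*(v*A))) = (u+v)*G/(u*B*(v*A)) := by
    rw [mul_div_assoc', ← mul_assoc, hC]
  rw [h]
  field_simp
  ring

lemma binomMu_pascal (μ : ℝ) (hμ : -(1/2 : ℝ) < μ) (n j : ℕ) (hj : j ≤ 2*n+2) :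
    binomMu μ (2*n+1) ((j:ℤ)-1) + binomMu μ (2*n+1) (j:ℤ)
    = (1 + 2*μ/((n:ℝ)+1) * (if Odd j then 1 else 0)) * binomMu μ (2*n+2) (j:ℤ) := by
  have hG := gammaMu_pos μ hμ
  rcases j with _ | i
  · simp [binomMu_neg_one, binomMu_zero μ hμ, Nat.odd_iff]
  · rcases eq_or_lt_of_le hj with heq | hlt
    · -- j = 2*n+2
      rw [show i + 1 = 2*n+2 by omega]
      have h1 : ((2*n+2 : ℕ) : ℤ) - 1 = ((2*n+1 : ℕ) : ℤ) := by push_cast; ring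
      rw [h1, binomMu_self μ hμ, binomMu_gt μ (2*n+1) ((2*n+2:ℕ):ℤ) (by push_cast; omega),
        binomMu_self μ hμ]
      have : ¬ Odd (2*n+2) := by simp [Nat.odd_iff]
      simp [this]
    · -- middle case: i + 1 ≤ 2*n+1
      have hle : i + 1 ≤ 2*n+1 := by omega
      obtain ⟨d, hd⟩ : ∃ d, i + 1 + d = 2*n+1 := ⟨2*n - i, by omega⟩
      have h1 : ((i+1 : ℕ) : ℤ) - 1 = (i : ℤ) := by push_cast; ring
      rw [h1]
      have e1 : binomMu μ (2*n+1) (i:ℤ) = gammaMu μ (2*n+1) / (gammaMu μ (d+1) * gammaMu μ i) := by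
        rw [binomMu_nat μ _ _ (by omega)]
        congr 3
        omega
      have e2 : binomMu μ (2*n+1) ((i+1:ℕ):ℤ)
          = gammaMu μ (2*n+1) / (gammaMu μ d * gammaMu μ (i+1)) := by
        rw [binomMu_nat μ _ _ (by omega)]
        congr 3
        omega
      have e3 : binomMu μ (2*n+2) ((i+1:ℕ):ℤ)
          = gammaMu μ (2*n+2) / (gammaMu μ (d+1) * gammaMu μ (i+1)) := by
        rw [binomMu_nat μ _ _ (by omega)]
        congr 3
        omega
      have e4 : gammaMu μ (2*n+2) = (2*(n:ℝ)+2) * gammaMu μ (2*n+1) := by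
        have h := gammaMu_succ μ (2*n+1)
        have hodd : ¬ Odd (2*n+1+1) := by simp [Nat.odd_iff]; omega
        rw [if_neg hodd] at h
        rw [show 2*n+2 = 2*n+1+1 from rfl, h]
        push_cast
        ring
      have hA := gammaMu_succ μ i
      have hB := gammaMu_succ μ d
      have hpar : Odd (d+1) ↔ Odd (i+1) := by simp [Nat.odd_iff]; omega
      have hid : (i:ℝ) + 1 + d = 2*(n:ℝ)+1 := by exact_mod_cast congrArg (Nat.cast (R := ℝ)) hd
      have hn1 : ((n:ℝ)+1) ≠ 0 := by positivity
      have h4 : 2*μ/((n:ℝ)+1)*(2*(n:ℝ)+2) = 4*μ := by field_simp; ring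
      have hA0 : gammaMu μ i ≠ 0 := ne_of_gt (hG i)
      have hB0 : gammaMu μ d ≠ 0 := ne_of_gt (hG d)
      have hG0 : gammaMu μ (2*n+1) ≠ 0 := ne_of_gt (hG _)
      rw [e1, e2, e3, e4, hA, hB]
      by_cases ho : Odd (i+1)
      · simp only [if_pos ho, if_pos (hpar.mpr ho)]
        have hia : (0:ℝ) < (i:ℝ) + 1 + 2*μ*1 := by
          have : (0:ℝ) ≤ (i:ℝ) := Nat.cast_nonneg i
          linarith
        have hda : (0:ℝ) < (d:ℝ) + 1 + 2*μ*1 := by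
          have : (0:ℝ) ≤ (d:ℝ) := Nat.cast_nonneg d
          linarith
        have hC : (1 + 2*μ/((n:ℝ)+1)*1) * (2*(n:ℝ)+2)
            = ((d:ℝ)+1+2*μ*1) + ((i:ℝ)+1+2*μ*1) := by
          rw [mul_one, add_mul, one_mul, h4]
          linarith
        exact alg_helper _ _ _ _ _ _ _ hA0 hB0 (ne_of_gt hda) (ne_of_gt hia) hC
      · simp only [if_neg ho, if_neg (fun h => ho (hpar.mp h))]
        have hia : (0:ℝ) < (i:ℝ) + 1 + 2*μ*0 := by
          have : (0:ℝ) ≤ (i:ℝ) := Nat.cast_nonneg i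
          linarith
        have hda : (0:ℝ) < (d:ℝ) + 1 + 2*μ*0 := by
          have : (0:ℝ) ≤ (d:ℝ) := Nat.cast_nonneg d
          linarith
        have hC : (1 + 2*μ/((n:ℝ)+1)*0) * (2*(n:ℝ)+2)
            = ((d:ℝ)+1+2*μ*0) + ((i:ℝ)+1+2*μ*0) := by
          simp only [mul_zero, add_zero, one_mul]
          linarith
        exact alg_helper _ _ _ _ _ _ _ hA0 hB0 (ne_of_gt hda) (ne_of_gt hia) hC

lemma sum_odd_range (m : ℕ) (f : ℕ → ℂ) :
    ∑ j ∈ Finset.range (2*m+1), (if Odd j then f j else 0) = ∑ k ∈ Finset.range m, f (2*k+1) := by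
  induction m with
  | zero => simp
  | succ m ih =>
    rw [show 2*(m+1)+1 = (2*m+1)+1+1 by ring, Finset.sum_range_succ, Finset.sum_range_succ, ih,
      Finset.sum_range_succ]
    have h1 : Odd (2*m+1) := Nat.odd_iff.mpr (by omega)
    have h2 : ¬ Odd (2*m+1+1) := by rw [Nat.odd_iff]; omega
    simp [h1, h2]

theorem pMu_mul_odd (μ : ℝ) (hμ : -(1/2 : ℝ) < μ) (n : ℕ) (x y : ℂ) :
    (x + y) * pMu μ (2 * n + 1) x y =
      pMu μ (2 * n + 2) x y +
        ((2 * μ / (n + 1) : ℝ) : ℂ) *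
          ∑ k ∈ Finset.range (n + 1),
            (binomMu μ (2 * n + 2) (2 * k + 1) : ℂ) * x ^ (2 * k + 1) * y ^ (2 * n + 1 - 2 * k) := by
  have key : ∀ j : ℕ, j ≤ 2*n+2 →
      ((binomMu μ (2*n+1) ((j:ℤ)-1) : ℝ) : ℂ) + ((binomMu μ (2*n+1) (j:ℤ) : ℝ) : ℂ)
      = (1 + ((2*μ/((n:ℝ)+1) : ℝ) : ℂ) * (if Odd j then 1 else 0))
          * ((binomMu μ (2*n+2) (j:ℤ) : ℝ) : ℂ) := by
    intro j hj
    have h := binomMu_pascal μ hμ n j hj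
    have h2 := congrArg (fun r : ℝ => (r : ℂ)) h
    simp only [Complex.ofReal_mul, Complex.ofReal_add, Complex.ofReal_one,
      Complex.ofReal_div, Complex.ofReal_ofNat, apply_ite (fun r : ℝ => (r : ℂ)),
      Complex.ofReal_zero] at h2
    push_cast at h2 ⊢
    convert h2 using 2 <;> simp
  have hx : ∑ j ∈ Finset.range (2*n+2+1),
      ((binomMu μ (2*n+1) ((j:ℤ)-1) : ℝ) : ℂ) * x^j * y^(2*n+2-j)
      = x * pMu μ (2*n+1) x y := by
    rw [Finset.sum_range_succ']
    rw [pMu, Finset.mul_sum]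
    have h0 : (((0:ℕ):ℤ)-1 : ℤ) = -1 := by norm_num
    rw [h0, binomMu_neg_one]
    simp only [Complex.ofReal_zero, zero_mul, add_zero]
    refine Finset.sum_congr rfl fun k hk => ?_
    have h1 : ((k+1 : ℕ) : ℤ) - 1 = (k : ℤ) := by push_cast; ring
    rw [h1, show 2*n+2-(k+1) = 2*n+1-k by omega]
    ring
  have hy : ∑ j ∈ Finset.range (2*n+2+1),
      ((binomMu μ (2*n+1) ((j:ℕ):ℤ) : ℝ) : ℂ) * x^j * y^(2*n+2-j)
      = y * pMu μ (2*n+1) x y := by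
    rw [Finset.sum_range_succ, binomMu_gt μ (2*n+1) ((2*n+2:ℕ):ℤ) (by push_cast; omega)]
    simp only [Complex.ofReal_zero, zero_mul, add_zero]
    rw [pMu, Finset.mul_sum]
    refine Finset.sum_congr rfl fun k hk => ?_
    have hk' : k ≤ 2*n+1 := by
      have := Finset.mem_range.mp hk; omega
    rw [show 2*n+2-k = (2*n+1-k)+1 by omega, pow_succ]
    ring
  have hodd : ((2 * μ / (n + 1) : ℝ) : ℂ) *
      ∑ k ∈ Finset.range (n + 1),
        (binomMu μ (2 * n + 2) (2 * k + 1) : ℂ) * x ^ (2 * k + 1) * y ^ (2 * n + 1 - 2 * k)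
      = ∑ j ∈ Finset.range (2*(n+1)+1),
          (if Odd j then ((2*μ/((n:ℝ)+1) : ℝ) : ℂ)
            * ((binomMu μ (2*n+2) ((j:ℕ):ℤ) : ℝ) : ℂ) * x^j * y^(2*n+2-j) else 0) := by
    rw [sum_odd_range (n+1)
      (fun j => ((2*μ/((n:ℝ)+1) : ℝ) : ℂ)
        * ((binomMu μ (2*n+2) ((j:ℕ):ℤ) : ℝ) : ℂ) * x^j * y^(2*n+2-j)), Finset.mul_sum]
    refine Finset.sum_congr rfl fun k hk => ?_
    have h1 : (((2*k+1 : ℕ)):ℤ) = 2*(k:ℤ)+1 := by push_cast; ring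
    rw [h1, show 2*n+2-(2*k+1) = 2*n+1-2*k by omega]
    ring
  calc (x + y) * pMu μ (2 * n + 1) x y
      = x * pMu μ (2*n+1) x y + y * pMu μ (2*n+1) x y := by ring
    _ = ∑ j ∈ Finset.range (2*n+2+1),
          (((binomMu μ (2*n+1) ((j:ℤ)-1) : ℝ) : ℂ) * x^j * y^(2*n+2-j)
            + ((binomMu μ (2*n+1) ((j:ℕ):ℤ) : ℝ) : ℂ) * x^j * y^(2*n+2-j)) := by
        rw [Finset.sum_add_distrib, hx, hy]
    _ = ∑ j ∈ Finset.range (2*n+2+1),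
          (((binomMu μ (2*n+2) ((j:ℕ):ℤ) : ℝ) : ℂ) * x^j * y^(2*n+2-j)
            + (if Odd j then ((2*μ/((n:ℝ)+1) : ℝ) : ℂ)
                * ((binomMu μ (2*n+2) ((j:ℕ):ℤ) : ℝ) : ℂ) * x^j * y^(2*n+2-j) else 0)) := by
        refine Finset.sum_congr rfl fun j hj => ?_
        have hj' : j ≤ 2*n+2 := by
          have := Finset.mem_range.mp hj; omega
        have hk := key j hj'
        by_cases ho : Odd j
        · simp only [if_pos ho, mul_one] at hk ⊢
          linear_combination (x^j * y^(2*n+2-j)) * hk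
        · simp only [if_neg ho, mul_zero, add_zero] at hk ⊢
          linear_combination (x^j * y^(2*n+2-j)) * hk
    _ = pMu μ (2 * n + 2) x y +
        ((2 * μ / (n + 1) : ℝ) : ℂ) *
          ∑ k ∈ Finset.range (n + 1),
            (binomMu μ (2 * n + 2) (2 * k + 1) : ℂ) * x ^ (2 * k + 1) * y ^ (2 * n + 1 - 2 * k) := by
        rw [Finset.sum_add_distrib, hodd, pMu, show 2*(n+1)+1 = 2*n+2+1 by ring]
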